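/- Let V, Z, W, H₊, H₋ be real Hilbert spaces and let ι : V → Z, G : V → W, T₊ : V → H₊, T₋ : V → H₋ be bounded linear maps. Let σ_A, σ_T > 0 and let 𝒯, 𝒮 : V → Z be bounded linear maps satisfying, for all u ∈ V: ‖𝒯u‖² = ‖Gu‖² + σ_A(‖T₊u‖² − ‖T₋u‖²) + σ_A²‖ιu‖², and ‖𝒮u‖ ≤ 2σ_T‖ιu‖. Then for every α ∈ (0, 1) and every u ∈ V: ‖(𝒯 + 𝒮)u‖² ≥ α(‖Gu‖² + σ_A‖T₊u‖² − σ_A‖T₋u‖²) + (σ_A²α − 4σ_T²/(1 − α))‖ιu‖². -/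

import Mathlib

set_option maxHeartbeats 1000000


/-- Coercivity estimate for the transport-scattering residual (main intermediate
inequality in the proof of Theorem 3.6): under the transport integration-by-parts
identity and the scattering bound, for every `α ∈ (0,1)`,
`‖(𝒯 + 𝒮)u‖² ≥ α(‖Gu‖² + σ_A‖T₊u‖² − σ_A‖T₋u‖²) + (σ_A²α − 4σ_T²/(1 − α))‖ιu‖²`. -/
theorem transport_scattering_coercivity
    {V Z W Hp Hm : Type*}
    [NormedAddCommGroup V] [InnerProductSpace ℝ V] [CompleteSpace V]
    [NormedAddCommGroup Z] [InnerProductSpace ℝ Z] [CompleteSpace Z]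
    [NormedAddCommGroup W] [InnerProductSpace ℝ W] [CompleteSpace W]
    [NormedAddCommGroup Hp] [InnerProductSpace ℝ Hp] [CompleteSpace Hp]
    [NormedAddCommGroup Hm] [InnerProductSpace ℝ Hm] [CompleteSpace Hm]
    (ι : V →L[ℝ] Z) (G : V →L[ℝ] W) (Tp : V →L[ℝ] Hp) (Tm : V →L[ℝ] Hm)
    (σA σT : ℝ) (hσA : 0 < σA) (hσT : 0 < σT)
    (𝒯 𝒮 : V →L[ℝ] Z)
    (hT : ∀ u : V, ‖𝒯 u‖^2
        = ‖G u‖^2 + σA * (‖Tp u‖^2 - ‖Tm u‖^2) + σA^2 * ‖ι u‖^2)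
    (hS : ∀ u : V, ‖𝒮 u‖ ≤ 2 * σT * ‖ι u‖)
    (α : ℝ) (hα : α ∈ Set.Ioo (0 : ℝ) 1) (u : V) :
    α * (‖G u‖^2 + σA * ‖Tp u‖^2 - σA * ‖Tm u‖^2)
      + (σA^2 * α - 4 * σT^2 / (1 - α)) * ‖ι u‖^2
      ≤ ‖𝒯 u + 𝒮 u‖^2 := by
  obtain ⟨hα0, hα1⟩ := hα
  have h1 : 0 < 1 - α := by linarith
  obtain ⟨t, ht⟩ : ∃ t, t = ‖𝒯 u‖ := ⟨_, rfl⟩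
  obtain ⟨s, hs⟩ : ∃ s, s = ‖𝒮 u‖ := ⟨_, rfl⟩
  obtain ⟨r, hr⟩ : ∃ r, r = ‖𝒯 u + 𝒮 u‖ := ⟨_, rfl⟩
  obtain ⟨i, hi⟩ : ∃ i, i = ‖ι u‖ := ⟨_, rfl⟩
  have htr : t ≤ r + s := by
    rw [ht, hr, hs]
    calc ‖𝒯 u‖ = ‖(𝒯 u + 𝒮 u) - 𝒮 u‖ := by congr 1; abel
    _ ≤ ‖𝒯 u + 𝒮 u‖ + ‖𝒮 u‖ := norm_sub_le _ _
  have hsr : s ≤ r + t := by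
    rw [ht, hr, hs]
    calc ‖𝒮 u‖ = ‖(𝒯 u + 𝒮 u) - 𝒯 u‖ := by congr 1; abel
    _ ≤ ‖𝒯 u + 𝒮 u‖ + ‖𝒯 u‖ := norm_sub_le _ _
  have hr0 : 0 ≤ r := hr ▸ norm_nonneg _
  have hs0 : 0 ≤ s := hs ▸ norm_nonneg _
  have hi0 : 0 ≤ i := hi ▸ norm_nonneg _
  have hkey : (t - s)^2 ≤ r^2 := by
    rcases le_total s t with h | h
    · nlinarith
    · nlinarith
  have hS' : s ≤ 2 * σT * i := by rw [hs, hi]; exact hS u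
  have hTeq : t^2 = ‖G u‖^2 + σA * (‖Tp u‖^2 - ‖Tm u‖^2) + σA^2 * i^2 := by
    rw [ht, hi]; exact hT u
  have hdiv : 4 * σT^2 / (1 - α) * (1 - α) = 4 * σT^2 :=
    div_mul_cancel₀ _ (ne_of_gt h1)
  have hyoung : 0 ≤ ((1 - α) * t - s)^2 := sq_nonneg _
  have hsq : s^2 ≤ 4 * σT^2 * i^2 := by nlinarith
  have step1 : α*(1-α)*t^2 - α*s^2 ≤ (1-α)*r^2 := by
    nlinarith [mul_le_mul_of_nonneg_left hkey h1.le, hyoung]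
  have step2 : α*s^2 ≤ α*(4*σT^2*i^2) := mul_le_mul_of_nonneg_left hsq hα0.le
  have hnn : 0 ≤ σT^2*i^2 := mul_nonneg (sq_nonneg _) (sq_nonneg _)
  have step3 : α*(4*σT^2*i^2) ≤ 4*σT^2*i^2 := by nlinarith [mul_nonneg h1.le hnn]
  have hdiv2 : 4*σT^2/(1-α)*(1-α)*i^2 = 4*σT^2*i^2 := by rw [hdiv]
  have hTe2 : α*(1-α)*t^2
      = α*(1-α)*(‖G u‖^2 + σA*‖Tp u‖^2 - σA*‖Tm u‖^2 + σA^2*i^2) := by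
    rw [hTeq]; ring
  have final : (1-α) * (α * (‖G u‖^2 + σA*‖Tp u‖^2 - σA*‖Tm u‖^2)
      + (σA^2*α - 4*σT^2/(1-α)) * i^2) ≤ (1-α)*r^2 := by
    have hexp : (1-α) * (α * (‖G u‖^2 + σA*‖Tp u‖^2 - σA*‖Tm u‖^2)
        + (σA^2*α - 4*σT^2/(1-α)) * i^2)
        = α*(1-α)*(‖G u‖^2 + σA*‖Tp u‖^2 - σA*‖Tm u‖^2 + σA^2*i^2)
          - 4*σT^2/(1-α)*(1-α)*i^2 := by ring
    rw [hexp, hdiv2, ← hTe2]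
    linarith [step1, step2, step3]
  rw [← hr, ← hi]
  exact (mul_le_mul_iff_right₀ h1).mp final
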